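/- arXiv:1201.0626 — 2 statements merged into one kernel-verified Lean document; each statement's English description precedes it below -/
import Mathlib

section
/- For every position (a,n), the optimal value of the Chow–Robbins game satisfies the backward recursion V(a,n) = max(a/n, (V(a, n+1) + V(a+1, n+1))/2). -/
open MeasureTheory ProbabilityTheory Real

/-- `X` is an i.i.d. sequence of fair coin flips taking values in `{0,1}`,
with probability `1/2` of heads (`= 1`). -/
def IsFairCoinSeq {Ω : Type*} [MeasurableSpace Ω] (μ : Measure Ω) (X : ℕ → Ω → ℝ) : Prop :=
  (∀ i, Measurable (X i)) ∧
  (∀ i ω, X i ω = 0 ∨ X i ω = 1) ∧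
  (∀ i, μ {ω | X i ω = 1} = 1/2) ∧
  iIndepFun X μ

/-- `headsProp X a n k ω` is the proportion of heads `R_k` after `k` further flips,
starting from position `(a,n)`: `a` heads out of `n` flips. -/
noncomputable def headsProp {Ω : Type*} (X : ℕ → Ω → ℝ) (a n k : ℕ) (ω : Ω) : ℝ :=
  ((a : ℝ) + ∑ i ∈ Finset.range k, X i ω) / ((n : ℝ) + k)

/-- The natural filtration of the coin flips: `coinFiltration X k` is the σ-algebra
generated by the first `k` future flips `X 0, …, X (k-1)`. -/
def coinFiltration {Ω : Type*} (X : ℕ → Ω → ℝ) (k : ℕ) : MeasurableSpace Ω :=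
  ⨆ i ∈ Finset.range k, MeasurableSpace.comap (X i) inferInstance

/-- `τ` is an almost surely finite stopping time with respect to the natural
filtration of the coin flips. -/
def IsAEFiniteStoppingTime {Ω : Type*} [MeasurableSpace Ω] (μ : Measure Ω)
    (X : ℕ → Ω → ℝ) (τ : Ω → ℕ∞) : Prop :=
  (∀ k : ℕ, MeasurableSet[coinFiltration X k] {ω | τ ω ≤ (k : ℕ∞)}) ∧
  μ {ω | τ ω = ⊤} = 0

/-- The optimal value `V(a,n)`: the supremum, over all almost surely finite stopping
times `τ` for the natural filtration of the flips, of the expected payoff `E[R_τ]`. -/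
noncomputable def gameValue {Ω : Type*} [MeasurableSpace Ω] (μ : Measure Ω)
    (X : ℕ → Ω → ℝ) (a n : ℕ) : ℝ :=
  ⨆ τ : {τ : Ω → ℕ∞ // IsAEFiniteStoppingTime μ X τ},
    ∫ ω, headsProp X a n ((τ.1 ω).toNat) ω ∂μ


namespace CRaux

open scoped Classical

def bit (b : Bool) : ℝ := if b then 1 else 0

def ones (s : List Bool) : ℕ := s.count true

lemma ones_le (s : List Bool) : ones s ≤ s.length := List.count_le_length

lemma ones_cons_false (s : List Bool) : ones (false :: s) = ones s := by
  simp [ones, List.count_cons]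

lemma ones_cons_true (s : List Bool) : ones (true :: s) = ones s + 1 := by
  simp [ones, List.count_cons]

variable {Ω : Type*}

def cyl (X : ℕ → Ω → ℝ) (s : List Bool) : Set Ω :=
  {ω | ∀ i < s.length, X i ω = bit (s.getD i false)}

noncomputable def pref (X : ℕ → Ω → ℝ) (k : ℕ) (ω : Ω) : List Bool :=
  List.ofFn (fun i : Fin k => decide (X i ω = 1))

@[simp] lemma length_pref (X : ℕ → Ω → ℝ) (k : ℕ) (ω : Ω) :
    (pref X k ω).length = k := by simp [pref]

lemma getD_pref (X : ℕ → Ω → ℝ) {k i : ℕ} (h : i < k) (ω : Ω) :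
    (pref X k ω).getD i false = decide (X i ω = 1) := by
  rw [List.getD_eq_getElem _ _ (by simpa using h)]
  simp [pref]

lemma pref_take (X : ℕ → Ω → ℝ) {j k : ℕ} (h : j ≤ k) (ω : Ω) :
    (pref X k ω).take j = pref X j ω := by
  apply List.ext_getElem
  · simp [h]
  · intro i h1 h2
    have hik : i < k := by simp at h2; omega
    rw [List.getElem_take]
    simp [pref]

section X01
variable {X : ℕ → Ω → ℝ} (hX01 : ∀ i ω, X i ω = 0 ∨ X i ω = 1)
include hX01

lemma bit_decide {i : ℕ} {ω : Ω} : bit (decide (X i ω = 1)) = X i ω := by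
  rcases hX01 i ω with h | h <;> simp [bit, h]

lemma mem_cyl_pref (k : ℕ) (ω : Ω) : ω ∈ cyl X (pref X k ω) := by
  intro i hi
  rw [length_pref] at hi
  rw [getD_pref X hi, bit_decide hX01]

omit hX01 in
lemma pref_eq_of_mem_cyl {s : List Bool} {ω : Ω} (hω : ω ∈ cyl X s) :
    pref X s.length ω = s := by
  apply List.ext_getElem (by simp)
  intro i h1 h2
  have hi : i < s.length := h2
  have := hω i hi
  rw [List.getD_eq_getElem _ _ hi] at this
  simp only [pref, List.getElem_ofFn]
  cases hb : s[i]
  · apply decide_eq_false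
    rw [this, hb]
    norm_num [bit]
  · apply decide_eq_true
    rw [this, hb]
    norm_num [bit]

lemma mem_cyl_iff {s : List Bool} {k : ℕ} (hk : s.length = k) {ω : Ω} :
    ω ∈ cyl X s ↔ pref X k ω = s := by
  subst hk
  constructor
  · exact pref_eq_of_mem_cyl
  · rintro h; rw [← h]; exact mem_cyl_pref hX01 _ ω

end X01

lemma sum_eq_ones_aux : ∀ (s : List Bool) (f : ℕ → ℝ),
    (∀ i < s.length, f i = bit (s.getD i false)) →
    ∑ i ∈ Finset.range s.length, f i = (s.count true : ℝ) := by
  intro s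
  induction s with
  | nil => intro f _; simp
  | cons b t ih =>
    intro f hf
    rw [List.length_cons, Finset.sum_range_succ']
    have h0 : f 0 = bit b := hf 0 (by simp)
    have ht : ∑ i ∈ Finset.range t.length, f (i + 1) = (t.count true : ℝ) := by
      apply ih
      intro i hi
      exact hf (i + 1) (by simpa using Nat.succ_lt_succ hi)
    rw [ht, h0, List.count_cons]
    cases b <;> simp [bit] <;> push_cast <;> ring

lemma sum_cyl {X : ℕ → Ω → ℝ} {s : List Bool} {ω : Ω} (hω : ω ∈ cyl X s) :
    ∑ i ∈ Finset.range s.length, X i ω = (s.count true : ℝ) :=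
  sum_eq_ones_aux s (fun i => X i ω) hω

-- ## Stopping rules
def MinStop (r : List Bool → Prop) : Set (List Bool) :=
  {s | r s ∧ ∀ k < s.length, ¬ r (s.take k)}

def Hit (X : ℕ → Ω → ℝ) (r : List Bool → Prop) : Set Ω := {ω | ∃ j, r (pref X j ω)}

def Induces (X : ℕ → Ω → ℝ) (r : List Bool → Prop) (τ : Ω → ℕ∞) : Prop :=
  ∀ ω (k : ℕ), τ ω ≤ (k : ℕ∞) ↔ ∃ j ≤ k, r (pref X j ω)

noncomputable def tauOf (X : ℕ → Ω → ℝ) (r : List Bool → Prop) (ω : Ω) : ℕ∞ :=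
  if h : ∃ j, r (pref X j ω) then (Nat.find h : ℕ∞) else ⊤

lemma induces_tauOf (X : ℕ → Ω → ℝ) (r : List Bool → Prop) : Induces X r (tauOf X r) := by
  intro ω k
  by_cases h : ∃ j, r (pref X j ω)
  · rw [tauOf, dif_pos h, Nat.cast_le, Nat.find_le_iff]
  · rw [tauOf, dif_neg h]
    push_neg at h
    simp [h]

lemma Induces.ne_top_iff {X : ℕ → Ω → ℝ} {r : List Bool → Prop} {τ : Ω → ℕ∞}
    (hτ : Induces X r τ) {ω : Ω} : τ ω ≠ ⊤ ↔ ω ∈ Hit X r := by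
  constructor
  · intro h
    obtain ⟨m, hm⟩ := WithTop.ne_top_iff_exists.1 h
    obtain ⟨j, _, hj⟩ := (hτ ω m).1 hm.ge
    exact ⟨j, hj⟩
  · rintro ⟨j, hj⟩
    have : τ ω ≤ (j : ℕ∞) := (hτ ω j).2 ⟨j, le_rfl, hj⟩
    exact ne_top_of_le_ne_top (by simp) this

lemma Induces.eq_on_cyl {X : ℕ → Ω → ℝ} (hX01 : ∀ i ω, X i ω = 0 ∨ X i ω = 1)
    {r : List Bool → Prop} {τ : Ω → ℕ∞} (hτ : Induces X r τ) {s : List Bool}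
    (hs : s ∈ MinStop r) {ω : Ω} (hω : ω ∈ cyl X s) : τ ω = (s.length : ℕ∞) := by
  have hpref : pref X s.length ω = s := pref_eq_of_mem_cyl hω
  have hle : τ ω ≤ (s.length : ℕ∞) :=
    (hτ ω s.length).2 ⟨s.length, le_rfl, by rw [hpref]; exact hs.1⟩
  refine le_antisymm hle ?_
  by_contra hlt
  push_neg at hlt
  obtain ⟨m, hm⟩ := WithTop.ne_top_iff_exists.1 (hlt.trans_le le_top).ne
  rw [← hm] at hlt
  have hmlen : m < s.length := by exact_mod_cast (show ((m:ℕ):ℕ∞) < s.length from hlt)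
  obtain ⟨j, hjm, hj⟩ := (hτ ω m).1 hm.ge
  have : pref X j ω = s.take j := by
    rw [← pref_take X (le_of_lt (lt_of_le_of_lt hjm hmlen)) ω, hpref]
  exact hs.2 j (lt_of_le_of_lt hjm hmlen) (this ▸ hj)

lemma hit_eq_iUnion {X : ℕ → Ω → ℝ} (hX01 : ∀ i ω, X i ω = 0 ∨ X i ω = 1)
    (r : List Bool → Prop) : Hit X r = ⋃ s : MinStop r, cyl X (s : List Bool) := by
  ext ω
  constructor
  · rintro ⟨j, hj⟩
    have h : ∃ j, r (pref X j ω) := ⟨j, hj⟩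
    set m := Nat.find h with hm
    refine Set.mem_iUnion.2 ⟨⟨pref X m ω, ⟨Nat.find_spec h, ?_⟩⟩, mem_cyl_pref hX01 m ω⟩
    intro k hk
    rw [length_pref] at hk
    rw [pref_take X hk.le ω]
    exact Nat.find_min h hk
  · intro hω
    obtain ⟨⟨s, hs⟩, hcyl⟩ := Set.mem_iUnion.1 hω
    exact ⟨s.length, (pref_eq_of_mem_cyl hcyl).symm ▸ hs.1⟩

lemma cyl_disjoint_minstop {X : ℕ → Ω → ℝ} (hX01 : ∀ i ω, X i ω = 0 ∨ X i ω = 1)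
    (r : List Bool → Prop) :
    Pairwise (Function.onFun Disjoint (fun s : MinStop r => cyl X (s : List Bool))) := by
  intro s t hst
  refine Set.disjoint_left.2 fun ω hsω htω => hst ?_
  have h1 := (induces_tauOf X r).eq_on_cyl hX01 s.2 hsω
  have h2 := (induces_tauOf X r).eq_on_cyl hX01 t.2 htω
  have hlen : (s : List Bool).length = (t : List Bool).length := by
    have := h1.symm.trans h2
    exact_mod_cast this
  have hpt : pref X (s : List Bool).length ω = (t : List Bool) := by
    rw [hlen]; exact pref_eq_of_mem_cyl htω
  exact Subtype.ext ((pref_eq_of_mem_cyl hsω).symm.trans hpt)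

lemma cyl_eq (X : ℕ → Ω → ℝ) (s : List Bool) :
    cyl X s = ⋂ i ∈ Finset.range s.length, X i ⁻¹' {bit (s.getD i false)} := by
  ext ω; simp [cyl, Set.mem_iInter]

section Meas
variable [MeasurableSpace Ω] {μ : Measure Ω} [IsProbabilityMeasure μ]
variable {X : ℕ → Ω → ℝ} (hX : IsFairCoinSeq μ X)
include hX

lemma meas_flip (i : ℕ) (b : Bool) : μ (X i ⁻¹' {bit b}) = 2⁻¹ := by
  have h1 : μ (X i ⁻¹' {(1:ℝ)}) = 2⁻¹ := by
    have := hX.2.2.1 i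
    rw [one_div] at this
    exact this
  cases b
  · have hset : X i ⁻¹' {(0:ℝ)} = (X i ⁻¹' {(1:ℝ)})ᶜ := by
      ext ω
      rcases hX.2.1 i ω with h | h <;> simp [h]
    have hm : MeasurableSet (X i ⁻¹' {(1:ℝ)}) := (hX.1 i) (measurableSet_singleton _)
    simp only [bit, if_false, Bool.false_eq_true]
    rw [hset, measure_compl hm (measure_ne_top μ _), h1, measure_univ]
    rw [ENNReal.one_sub_inv_two]
  · simpa [bit] using h1

lemma meas_cyl (s : List Bool) : μ (cyl X s) = 2⁻¹ ^ s.length := by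
  rw [cyl_eq]
  rw [hX.2.2.2.meas_biInter (fun i _ => ⟨{bit (s.getD i false)}, measurableSet_singleton _, rfl⟩)]
  rw [Finset.prod_congr rfl (fun i _ => meas_flip hX i (s.getD i false))]
  simp

end Meas

section Filt
variable {X : ℕ → Ω → ℝ}

lemma comap_le_filtration {i k : ℕ} (h : i < k) :
    MeasurableSpace.comap (X i) inferInstance ≤ coinFiltration X k :=
  le_iSup₂ (f := fun i (_ : i ∈ Finset.range k) =>
    MeasurableSpace.comap (X i) inferInstance) i (Finset.mem_range.2 h)

lemma measurableSet_cyl_filt {s : List Bool} {k : ℕ} (h : s.length ≤ k) :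
    MeasurableSet[coinFiltration X k] (cyl X s) := by
  rw [cyl_eq]
  refine MeasurableSet.biInter (Finset.range s.length).countable_toSet fun i hi => ?_
  refine comap_le_filtration (lt_of_lt_of_le (Finset.mem_range.1 hi) h) _ ?_
  exact ⟨{bit (s.getD i false)}, measurableSet_singleton _, rfl⟩

lemma coinFiltration_le [m0 : MeasurableSpace Ω] (hm : ∀ i, Measurable (X i)) (k : ℕ) :
    coinFiltration X k ≤ m0 :=
  iSup₂_le fun i _ => (hm i).comap_le

lemma measurableSet_cyl [MeasurableSpace Ω] (hm : ∀ i, Measurable (X i)) (s : List Bool) :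
    MeasurableSet (cyl X s) :=
  coinFiltration_le hm s.length _ (measurableSet_cyl_filt le_rfl)

lemma filtration_invariant {k : ℕ} {A : Set Ω} (hA : MeasurableSet[coinFiltration X k] A)
    {ω ω' : Ω} (h : ∀ i < k, X i ω = X i ω') (hω : ω ∈ A) : ω' ∈ A := by
  let m : MeasurableSpace Ω :=
    { MeasurableSet' := fun B => ∀ ω ω' : Ω, (∀ i < k, X i ω = X i ω') → (ω ∈ B ↔ ω' ∈ B)
      measurableSet_empty := by intro _ _ _; simp
      measurableSet_compl := by
        intro B hB ω ω' hh
        simp only [Set.mem_compl_iff]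
        rw [hB ω ω' hh]
      measurableSet_iUnion := by
        intro f hf ω ω' hh
        simp only [Set.mem_iUnion]
        exact exists_congr fun i => hf i ω ω' hh }
  have hle : coinFiltration X k ≤ m := by
    refine iSup₂_le fun i hi => ?_
    rintro B ⟨C, _, rfl⟩ ω ω' hh
    simp only [Set.mem_preimage]
    rw [hh i (Finset.mem_range.1 hi)]
  exact (hle A hA ω ω' h).1 hω

end Filt


-- ## Mass and payoff of a rule
noncomputable def massR (r : List Bool → Prop) : ℝ :=
  ∑' s : MinStop r, (1/2 : ℝ) ^ (s : List Bool).length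

noncomputable def payR (a n : ℕ) (r : List Bool → Prop) : ℝ :=
  ∑' s : MinStop r,
    (1/2 : ℝ) ^ (s : List Bool).length *
      (((a : ℝ) + ones (s : List Bool)) / ((n : ℝ) + (s : List Bool).length))

section MassPay
variable [MeasurableSpace Ω] {μ : Measure Ω} [IsProbabilityMeasure μ]
variable {X : ℕ → Ω → ℝ} (hX : IsFairCoinSeq μ X)
include hX

lemma summable_mass_terms (r : List Bool → Prop) :
    Summable (fun s : MinStop r => (1/2 : ℝ) ^ (s : List Bool).length) := by
  apply summable_of_sum_le (c := 1)
  · intro s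
    positivity
  · intro u
    have hdisj : (u : Set (MinStop r)).Pairwise
        (Function.onFun Disjoint (fun s : MinStop r => cyl X (s : List Bool))) :=
      fun s _ t _ hst => cyl_disjoint_minstop hX.2.1 r hst
    have hmeas : ∀ s ∈ u, MeasurableSet (cyl X (s : MinStop r).1) :=
      fun s _ => measurableSet_cyl hX.1 _
    have key : ∑ s ∈ u, (1/2 : ℝ) ^ (s : List Bool).length
        = (μ (⋃ s ∈ u, cyl X (s : List Bool))).toReal := by
      rw [measure_biUnion_finset hdisj hmeas]
      rw [ENNReal.toReal_sum (fun s _ => by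
        rw [meas_cyl hX]
        exact (ENNReal.pow_ne_top (by norm_num)))]
      refine Finset.sum_congr rfl fun s _ => ?_
      rw [meas_cyl hX]
      rw [ENNReal.toReal_pow]
      norm_num
    rw [key]
    have h2 := (measure_mono (Set.subset_univ (⋃ s ∈ u, cyl X (s : List Bool))) : _ ≤ μ Set.univ)
    rw [measure_univ] at h2
    calc (μ (⋃ s ∈ u, cyl X (s : List Bool))).toReal
        ≤ (1 : ENNReal).toReal := ENNReal.toReal_mono (by norm_num) h2
      _ = 1 := ENNReal.toReal_one

lemma mass_nonneg (r : List Bool → Prop) : 0 ≤ massR r :=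
  tsum_nonneg fun s => by positivity

lemma meas_hit (r : List Bool → Prop) : μ (Hit X r) = ENNReal.ofReal (massR r) := by
  rw [hit_eq_iUnion hX.2.1 r]
  rw [measure_iUnion (cyl_disjoint_minstop hX.2.1 r) (fun s => measurableSet_cyl hX.1 _)]
  rw [massR, ENNReal.ofReal_tsum_of_nonneg (fun s => by positivity) (summable_mass_terms hX r)]
  refine tsum_congr fun s => ?_
  rw [meas_cyl hX, ENNReal.ofReal_pow (by norm_num : (0:ℝ) ≤ 1/2)]
  congr 1
  rw [ENNReal.ofReal_div_of_pos (by norm_num), ENNReal.ofReal_one, ENNReal.ofReal_ofNat, one_div]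

lemma measurableSet_hit (r : List Bool → Prop) : MeasurableSet (Hit X r) := by
  rw [hit_eq_iUnion hX.2.1 r]
  exact MeasurableSet.iUnion fun s => measurableSet_cyl hX.1 _

lemma mass_le_one (r : List Bool → Prop) : massR r ≤ 1 := by
  have h := meas_hit hX r
  have hle : μ (Hit X r) ≤ 1 := prob_le_one
  rw [h] at hle
  have := ENNReal.ofReal_le_one.1 hle
  exact this

lemma summable_pay_terms {a n : ℕ} (hn : 1 ≤ n) (han : a ≤ n) (r : List Bool → Prop) :
    Summable (fun s : MinStop r =>
      (1/2 : ℝ) ^ (s : List Bool).length *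
        (((a : ℝ) + ones (s : List Bool)) / ((n : ℝ) + (s : List Bool).length))) := by
  refine Summable.of_nonneg_of_le (fun s => by positivity) (fun s => ?_)
    (summable_mass_terms hX r)
  have hpos : (0 : ℝ) < (n : ℝ) + (s : List Bool).length := by
    have : (1 : ℝ) ≤ (n : ℝ) := by exact_mod_cast hn
    positivity
  have hratio : ((a : ℝ) + ones (s : List Bool)) / ((n : ℝ) + (s : List Bool).length) ≤ 1 := by
    rw [div_le_one hpos]
    have h1 : (ones (s : List Bool) : ℝ) ≤ ((s : List Bool).length : ℝ) := by
      exact_mod_cast ones_le _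
    have h2 : (a : ℝ) ≤ (n : ℝ) := by exact_mod_cast han
    linarith
  calc (1/2 : ℝ) ^ (s : List Bool).length *
        (((a : ℝ) + ones (s : List Bool)) / ((n : ℝ) + (s : List Bool).length))
      ≤ (1/2 : ℝ) ^ (s : List Bool).length * 1 := by
        apply mul_le_mul_of_nonneg_left hratio (by positivity)
    _ = (1/2 : ℝ) ^ (s : List Bool).length := mul_one _

lemma ratio_mem_Icc {a n : ℕ} (hn : 1 ≤ n) (han : a ≤ n) (s : List Bool) :
    ((a : ℝ) + ones s) / ((n : ℝ) + s.length) ∈ Set.Icc (0:ℝ) 1 := by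
  have hpos : (0 : ℝ) < (n : ℝ) + s.length := by
    have : (1 : ℝ) ≤ (n : ℝ) := by exact_mod_cast hn
    positivity
  constructor
  · positivity
  · rw [div_le_one hpos]
    have h1 : (ones s : ℝ) ≤ (s.length : ℝ) := by exact_mod_cast ones_le _
    have h2 : (a : ℝ) ≤ (n : ℝ) := by exact_mod_cast han
    linarith

end MassPay


-- ## The integral of the stopped payoff equals the rule payoff
section Integral
variable [MeasurableSpace Ω] {μ : Measure Ω} [IsProbabilityMeasure μ]
variable {X : ℕ → Ω → ℝ} (hX : IsFairCoinSeq μ X)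
include hX

lemma hit_compl_eq {r : List Bool → Prop} {τ : Ω → ℕ∞} (hτ : Induces X r τ) :
    (Hit X r)ᶜ = {ω | τ ω = ⊤} := by
  ext ω
  simp only [Set.mem_compl_iff, Set.mem_setOf_eq, ← hτ.ne_top_iff, not_not]

lemma mass_eq_one_of_ae_finite {r : List Bool → Prop} {τ : Ω → ℕ∞}
    (hτ : Induces X r τ) (hfin : μ {ω | τ ω = ⊤} = 0) : massR r = 1 := by
  have h1 : μ (Hit X r) = 1 := by
    rw [← prob_compl_eq_zero_iff (measurableSet_hit hX r), hit_compl_eq hX hτ]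
    exact hfin
  rw [meas_hit hX r] at h1
  exact ENNReal.ofReal_eq_one.1 h1

lemma meas_top_of_mass_one {r : List Bool → Prop} {τ : Ω → ℕ∞}
    (hτ : Induces X r τ) (hm : massR r = 1) : μ {ω | τ ω = ⊤} = 0 := by
  rw [← hit_compl_eq hX hτ, prob_compl_eq_zero_iff (measurableSet_hit hX r),
    meas_hit hX r, hm]
  simp

lemma tsum_meas_cyl (r : List Bool → Prop) :
    ∑' s : MinStop r, μ (cyl X (s : List Bool)) = μ (Hit X r) := by
  rw [hit_eq_iUnion hX.2.1 r,
    measure_iUnion (cyl_disjoint_minstop hX.2.1 r) (fun s => measurableSet_cyl hX.1 _)]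

lemma integral_eq_payR {a n : ℕ} (hn : 1 ≤ n) (han : a ≤ n) {r : List Bool → Prop}
    {τ : Ω → ℕ∞} (hτ : Induces X r τ) (hfin : μ {ω | τ ω = ⊤} = 0) :
    ∫ ω, headsProp X a n ((τ ω).toNat) ω ∂μ = payR a n r := by
  classical
  set c : MinStop r → ℝ := fun s => ((a : ℝ) + ones (s : List Bool)) /
    ((n : ℝ) + (s : List Bool).length) with hc
  have hmass := mass_eq_one_of_ae_finite hX hτ hfin
  have hUc : μ (Hit X r)ᶜ = 0 := by
    rw [prob_compl_eq_zero_iff (measurableSet_hit hX r), meas_hit hX r, hmass]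
    simp
  have hae : (fun ω => headsProp X a n ((τ ω).toNat) ω) =ᵐ[μ]
      (fun ω => ∑' s : MinStop r, (cyl X (s : List Bool)).indicator (fun _ => c s) ω) := by
    rw [Filter.EventuallyEq, ae_iff]
    refine measure_mono_null (fun ω hω => ?_) hUc
    simp only [Set.mem_setOf_eq] at hω
    simp only [Set.mem_compl_iff]
    intro hHit
    apply hω
    rw [hit_eq_iUnion hX.2.1 r] at hHit
    obtain ⟨s0, hs0cyl⟩ := Set.mem_iUnion.1 hHit
    have hτω : τ ω = ((s0 : List Bool).length : ℕ∞) := hτ.eq_on_cyl hX.2.1 s0.2 hs0cyl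
    have htoNat : (τ ω).toNat = (s0 : List Bool).length := by rw [hτω]; simp
    have hf : headsProp X a n ((τ ω).toNat) ω = c s0 := by
      rw [htoNat, headsProp, sum_cyl hs0cyl]
      rfl
    have hgω : (∑' s : MinStop r, (cyl X (s : List Bool)).indicator (fun _ => c s) ω) = c s0 := by
      refine (tsum_eq_single s0 (fun t ht => ?_)).trans (by
        rw [Set.indicator_of_mem hs0cyl])
      have hdisj := cyl_disjoint_minstop hX.2.1 r ht
      have hnot : ω ∉ cyl X (t : List Bool) := fun hmem' =>
        (Set.disjoint_left.1 hdisj hmem') hs0cyl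
      rw [Set.indicator_of_notMem hnot]
    rw [hf, hgω]
  rw [integral_congr_ae hae]
  rw [integral_tsum (fun s =>
      (measurable_const.indicator (measurableSet_cyl hX.1 _)).aestronglyMeasurable) ?_]
  · refine tsum_congr fun s => ?_
    rw [integral_indicator_const (c s) (measurableSet_cyl hX.1 _), measureReal_def, meas_cyl hX,
      smul_eq_mul, ENNReal.toReal_pow]
    norm_num [hc, ENNReal.toReal_inv]
  · have hbound : ∀ s : MinStop r,
        ∫⁻ ω, ‖(cyl X (s : List Bool)).indicator (fun _ => c s) ω‖₊ ∂μ
          ≤ μ (cyl X (s : List Bool)) := by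
      intro s
      have hicc := ratio_mem_Icc hX hn han (s : List Bool)
      have hcs : (‖c s‖₊ : ENNReal) ≤ 1 := by
        rw [← ENNReal.coe_one, ENNReal.coe_le_coe, ← NNReal.coe_le_coe, coe_nnnorm,
          Real.norm_eq_abs, abs_of_nonneg hicc.1]
        exact hicc.2
      calc ∫⁻ ω, ‖(cyl X (s : List Bool)).indicator (fun _ => c s) ω‖₊ ∂μ
          = ∫⁻ ω, (cyl X (s : List Bool)).indicator (fun _ => (‖c s‖₊ : ENNReal)) ω ∂μ := by
            congr 1
            ext ω
            rw [nnnorm_indicator_eq_indicator_nnnorm]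
            by_cases hmem : ω ∈ cyl X (s : List Bool) <;>
              simp [Set.indicator_of_mem, Set.indicator_of_notMem, hmem]
        _ = (‖c s‖₊ : ENNReal) * μ (cyl X (s : List Bool)) := by
            rw [lintegral_indicator (measurableSet_cyl hX.1 _), setLIntegral_const]
        _ ≤ 1 * μ (cyl X (s : List Bool)) := by
            exact mul_le_mul_left hcs _
        _ = μ (cyl X (s : List Bool)) := one_mul _
    refine ne_top_of_le_ne_top ?_ (ENNReal.tsum_le_tsum hbound)
    rw [tsum_meas_cyl hX r]
    exact measure_ne_top μ _

end Integral


-- ## Correspondence between stopping times and rules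
def ruleOf (X : ℕ → Ω → ℝ) (τ : Ω → ℕ∞) : List Bool → Prop :=
  fun s => ∃ ω, τ ω ≤ (s.length : ℕ∞) ∧ ω ∈ cyl X s

def paySet (a n : ℕ) : Set ℝ := {x | ∃ r : List Bool → Prop, massR r = 1 ∧ payR a n r = x}

section Stopping
variable [MeasurableSpace Ω] {μ : Measure Ω} [IsProbabilityMeasure μ]
variable {X : ℕ → Ω → ℝ} (hX : IsFairCoinSeq μ X)
include hX

lemma stop_set_eq (r : List Bool → Prop) (k : ℕ) :
    {ω | tauOf X r ω ≤ (k : ℕ∞)} =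
      ⋃ (v : Fin k → Bool) (_ : ∃ j ≤ k, r ((List.ofFn v).take j)), cyl X (List.ofFn v) := by
  ext ω
  simp only [Set.mem_setOf_eq, Set.mem_iUnion]
  rw [induces_tauOf X r ω k]
  constructor
  · rintro ⟨j, hj, hr⟩
    have hofn : List.ofFn (fun i : Fin k => decide (X i ω = 1)) = pref X k ω := rfl
    refine ⟨fun i => decide (X i ω = 1), ⟨j, hj, ?_⟩, ?_⟩
    · rw [hofn, pref_take X hj ω]
      exact hr
    · rw [hofn]
      exact mem_cyl_pref hX.2.1 k ω
  · rintro ⟨v, ⟨j, hj, hr⟩, hcyl⟩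
    have hlen : (List.ofFn v).length = k := by simp
    have hpref : pref X k ω = List.ofFn v := (mem_cyl_iff hX.2.1 hlen).1 hcyl
    have hpj : pref X j ω = (List.ofFn v).take j := by
      rw [← pref_take X hj ω, hpref]
    exact ⟨j, hj, by rw [hpj]; exact hr⟩

lemma isStoppingTime_tauOf (r : List Bool → Prop) (hm : massR r = 1) :
    IsAEFiniteStoppingTime μ X (tauOf X r) := by
  constructor
  · intro k
    rw [stop_set_eq hX r k]
    exact MeasurableSet.iUnion fun v => MeasurableSet.iUnion fun _ =>
      measurableSet_cyl_filt (by simp)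
  · exact meas_top_of_mass_one hX (induces_tauOf X r) hm

lemma induces_ruleOf {τ : Ω → ℕ∞}
    (hstop : ∀ k : ℕ, MeasurableSet[coinFiltration X k] {ω | τ ω ≤ (k : ℕ∞)}) :
    Induces X (ruleOf X τ) τ := by
  intro ω k
  constructor
  · intro h
    exact ⟨k, le_rfl, ⟨ω, by rw [length_pref]; exact h, mem_cyl_pref hX.2.1 k ω⟩⟩
  · rintro ⟨j, hj, ω', hω'τ, hω'cyl⟩
    have hagree : ∀ i < j, X i ω' = X i ω := by
      intro i hi
      have h1 := hω'cyl i (by simpa using hi)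
      have h2 := mem_cyl_pref hX.2.1 j ω i (by simpa using hi)
      rw [h1, ← h2]
    rw [length_pref] at hω'τ
    have hωj : τ ω ≤ (j : ℕ∞) :=
      filtration_invariant (hstop j) hagree hω'τ
    exact le_trans hωj (by exact_mod_cast hj)

lemma gameValue_eq_sSup {a n : ℕ} (hn : 1 ≤ n) (han : a ≤ n) :
    gameValue μ X a n = sSup (paySet a n) := by
  rw [gameValue, ← sSup_range]
  congr 1
  ext x
  constructor
  · rintro ⟨⟨τ, hτs, hτf⟩, rfl⟩
    have hind := induces_ruleOf hX hτs
    exact ⟨ruleOf X τ, mass_eq_one_of_ae_finite hX hind hτf,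
      (integral_eq_payR hX hn han hind hτf).symm⟩
  · rintro ⟨r, hm, rfl⟩
    exact ⟨⟨tauOf X r, isStoppingTime_tauOf hX r hm⟩,
      integral_eq_payR hX hn han (induces_tauOf X r)
        (meas_top_of_mass_one hX (induces_tauOf X r) hm)⟩

end Stopping


-- ## Splitting a rule at the first flip
def childR (b : Bool) (r : List Bool → Prop) : List Bool → Prop := fun s => r (b :: s)

lemma minstop_cons {r : List Bool → Prop} (hr0 : ¬ r []) (b : Bool) (t : List Bool) :
    (b :: t) ∈ MinStop r ↔ t ∈ MinStop (childR b r) := by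
  constructor
  · rintro ⟨h1, h2⟩
    refine ⟨h1, fun k hk hc => ?_⟩
    exact h2 (k + 1) (by simpa using Nat.succ_lt_succ hk) (by simpa [List.take_succ_cons, childR] using hc)
  · rintro ⟨h1, h2⟩
    refine ⟨h1, fun k hk => ?_⟩
    match k with
    | 0 => simpa using hr0
    | k + 1 =>
      rw [List.take_succ_cons]
      exact h2 k (by simpa using hk)

noncomputable def consEquiv (r : List Bool → Prop) (hr0 : ¬ r []) :
    (Σ b : Bool, MinStop (childR b r)) ≃ MinStop r :=
  Equiv.ofBijective
    (fun p => ⟨p.1 :: p.2.1, (minstop_cons hr0 p.1 p.2.1).2 p.2.2⟩)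
    (by
      constructor
      · rintro ⟨b, t, ht⟩ ⟨b', t', ht'⟩ hpq
        have hval : b :: (t : List Bool) = b' :: (t' : List Bool) := congrArg Subtype.val hpq
        obtain ⟨hb, hts⟩ := List.cons.inj hval
        subst hb
        simp only [Sigma.mk.inj_iff, heq_eq_eq, true_and]
        exact Subtype.ext hts
      · rintro ⟨s, hs⟩
        match s, hs with
        | [], hs => exact absurd hs.1 hr0
        | b :: t, hs => exact ⟨⟨b, t, (minstop_cons hr0 b t).1 hs⟩, rfl⟩)

lemma tsum_minstop_split {r : List Bool → Prop} (hr0 : ¬ r []) (f : List Bool → ℝ)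
    (hsum : Summable fun s : MinStop r => f s) :
    ∑' s : MinStop r, f (s : List Bool)
      = (∑' t : MinStop (childR false r), f (false :: (t : List Bool))) +
        (∑' t : MinStop (childR true r), f (true :: (t : List Bool))) := by
  rw [← (consEquiv r hr0).tsum_eq (fun s : MinStop r => f (s : List Bool))]
  have hs2 : Summable fun p : Σ b : Bool, MinStop (childR b r) =>
      f ((consEquiv r hr0 p : List Bool)) := ((consEquiv r hr0).summable_iff).2 hsum
  rw [hs2.tsum_sigma, tsum_fintype, Fintype.sum_bool]
  rw [add_comm]
  rfl


-- ## Singleton rules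
lemma minstop_of_nil {r : List Bool → Prop} (hr0 : r []) :
    MinStop r = {([] : List Bool)} := by
  ext s
  constructor
  · rintro ⟨h1, h2⟩
    by_contra hne
    have hpos : 0 < s.length := List.length_pos_iff.2 (by simpa using hne)
    exact h2 0 hpos (by simpa using hr0)
  · rintro rfl
    exact ⟨hr0, fun k hk => absurd hk (by simp)⟩

lemma massR_of_singleton {r : List Bool → Prop} (h : MinStop r = {([] : List Bool)}) :
    massR r = 1 := by
  rw [massR, h]
  rw [show (∑' s : ({([] : List Bool)} : Set (List Bool)), (1/2 : ℝ) ^ (s : List Bool).length)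
      = (fun l : List Bool => (1/2 : ℝ) ^ l.length) [] from
    tsum_singleton ([] : List Bool) (fun l : List Bool => (1/2 : ℝ) ^ l.length)]
  simp

lemma payR_of_singleton {a n : ℕ} {r : List Bool → Prop}
    (h : MinStop r = {([] : List Bool)}) : payR a n r = (a : ℝ) / n := by
  rw [payR, h]
  rw [show (∑' s : ({([] : List Bool)} : Set (List Bool)),
        (1/2 : ℝ) ^ (s : List Bool).length *
          (((a : ℝ) + ones (s : List Bool)) / ((n : ℝ) + (s : List Bool).length)))
      = (fun l : List Bool => (1/2 : ℝ) ^ l.length *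
          (((a : ℝ) + ones l) / ((n : ℝ) + l.length))) [] from
    tsum_singleton ([] : List Bool) (fun l : List Bool => (1/2 : ℝ) ^ l.length *
      (((a : ℝ) + ones l) / ((n : ℝ) + l.length)))]
  simp [ones]

-- ## Combined rules
def combine (r0 r1 : List Bool → Prop) : List Bool → Prop :=
  fun s => (∃ t, s = false :: t ∧ r0 t) ∨ (∃ t, s = true :: t ∧ r1 t)

lemma combine_nil (r0 r1 : List Bool → Prop) : ¬ combine r0 r1 ([] : List Bool) := by
  rintro (⟨t, h, -⟩ | ⟨t, h, -⟩) <;> simp at h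

lemma childR_combine_false (r0 r1 : List Bool → Prop) :
    childR false (combine r0 r1) = r0 := by
  funext t
  apply propext
  constructor
  · rintro (⟨t', ht', h⟩ | ⟨t', ht', h⟩)
    · obtain ⟨-, rfl⟩ := List.cons.inj ht'
      exact h
    · exact absurd (List.cons.inj ht').1 (by simp)
  · intro h
    exact Or.inl ⟨t, rfl, h⟩

lemma childR_combine_true (r0 r1 : List Bool → Prop) :
    childR true (combine r0 r1) = r1 := by
  funext t
  apply propext
  constructor
  · rintro (⟨t', ht', h⟩ | ⟨t', ht', h⟩)
    · exact absurd (List.cons.inj ht').1 (by simp)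
    · obtain ⟨-, rfl⟩ := List.cons.inj ht'
      exact h
  · intro h
    exact Or.inr ⟨t, rfl, h⟩

section Split
variable [MeasurableSpace Ω] {μ : Measure Ω} [IsProbabilityMeasure μ]
variable {X : ℕ → Ω → ℝ} (hX : IsFairCoinSeq μ X)
include hX

lemma massR_split {r : List Bool → Prop} (hr0 : ¬ r []) :
    massR r = 1/2 * massR (childR false r) + 1/2 * massR (childR true r) := by
  rw [massR, tsum_minstop_split hr0 (fun s => (1/2 : ℝ) ^ s.length) (summable_mass_terms hX r)]
  congr 1
  · rw [massR, ← tsum_mul_left]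
    exact tsum_congr fun t => by rw [List.length_cons]; ring
  · rw [massR, ← tsum_mul_left]
    exact tsum_congr fun t => by rw [List.length_cons]; ring

lemma payR_split {a n : ℕ} (hn : 1 ≤ n) (han : a ≤ n) {r : List Bool → Prop} (hr0 : ¬ r []) :
    payR a n r = 1/2 * payR a (n+1) (childR false r)
      + 1/2 * payR (a+1) (n+1) (childR true r) := by
  rw [payR, tsum_minstop_split hr0
    (fun s => (1/2 : ℝ) ^ s.length * (((a : ℝ) + ones s) / ((n : ℝ) + s.length)))
    (summable_pay_terms hX hn han r)]
  congr 1
  · rw [payR, ← tsum_mul_left]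
    refine tsum_congr fun t => ?_
    rw [List.length_cons, ones_cons_false]
    push_cast
    ring
  · rw [payR, ← tsum_mul_left]
    refine tsum_congr fun t => ?_
    rw [List.length_cons, ones_cons_true]
    push_cast
    ring

lemma child_mass {r : List Bool → Prop} (hr0 : ¬ r []) (hm : massR r = 1) :
    massR (childR false r) = 1 ∧ massR (childR true r) = 1 := by
  have hsplit := massR_split hX hr0
  rw [hm] at hsplit
  have h0 := mass_le_one hX (childR false r)
  have h1 := mass_le_one hX (childR true r)
  constructor <;> linarith

lemma combine_mass {r0 r1 : List Bool → Prop} (hm0 : massR r0 = 1) (hm1 : massR r1 = 1) :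
    massR (combine r0 r1) = 1 := by
  rw [massR_split hX (combine_nil r0 r1), childR_combine_false, childR_combine_true, hm0, hm1]
  norm_num

lemma combine_pay {a n : ℕ} (hn : 1 ≤ n) (han : a ≤ n) (r0 r1 : List Bool → Prop) :
    payR a n (combine r0 r1)
      = 1/2 * payR a (n+1) r0 + 1/2 * payR (a+1) (n+1) r1 := by
  rw [payR_split hX hn han (combine_nil r0 r1), childR_combine_false, childR_combine_true]

-- ## Properties of the payoff set
lemma paySet_nonempty (a n : ℕ) : (paySet a n).Nonempty := by
  refine ⟨(a : ℝ) / n, fun _ => True, massR_of_singleton ?_, payR_of_singleton ?_⟩ <;>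
    exact minstop_of_nil trivial

lemma paySet_bddAbove {a n : ℕ} (hn : 1 ≤ n) (han : a ≤ n) : BddAbove (paySet a n) := by
  refine ⟨1, fun x hx => ?_⟩
  obtain ⟨r, hm, rfl⟩ := hx
  have hle : payR a n r ≤ massR r := by
    refine Summable.tsum_le_tsum (fun s => ?_) (summable_pay_terms hX hn han r) (summable_mass_terms hX r)
    have hicc := ratio_mem_Icc hX hn han (s : List Bool)
    calc (1/2 : ℝ) ^ (s : List Bool).length *
          (((a : ℝ) + ones (s : List Bool)) / ((n : ℝ) + (s : List Bool).length))
        ≤ (1/2 : ℝ) ^ (s : List Bool).length * 1 :=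
          mul_le_mul_of_nonneg_left hicc.2 (by positivity)
      _ = (1/2 : ℝ) ^ (s : List Bool).length := mul_one _
  rw [hm] at hle
  exact hle

end Split


-- ## The recursion at the level of payoff suprema
section Recursion
variable [MeasurableSpace Ω] {μ : Measure Ω} [IsProbabilityMeasure μ]
variable {X : ℕ → Ω → ℝ} (hX : IsFairCoinSeq μ X)
include hX

lemma sSup_paySet_recursion {a n : ℕ} (hn : 1 ≤ n) (han : a ≤ n) :
    sSup (paySet a n) =
      max ((a : ℝ) / n) ((sSup (paySet a (n+1)) + sSup (paySet (a+1) (n+1))) / 2) := by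
  have hn1 : 1 ≤ n + 1 := by omega
  have han0 : a ≤ n + 1 := by omega
  have han1 : a + 1 ≤ n + 1 := by omega
  have hbdd := paySet_bddAbove hX hn han
  have hbdd0 := paySet_bddAbove hX hn1 han0
  have hbdd1 := paySet_bddAbove hX hn1 han1
  have hne := paySet_nonempty hX a n
  have hne0 := paySet_nonempty hX a (n+1)
  have hne1 := paySet_nonempty hX (a+1) (n+1)
  apply le_antisymm
  · apply csSup_le hne
    rintro x ⟨r, hm, rfl⟩
    by_cases hr0 : r []
    · rw [payR_of_singleton (minstop_of_nil hr0)]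
      exact le_max_left _ _
    · obtain ⟨hm0, hm1⟩ := child_mass hX hr0 hm
      have h0 : payR a (n+1) (childR false r) ≤ sSup (paySet a (n+1)) :=
        le_csSup hbdd0 ⟨_, hm0, rfl⟩
      have h1 : payR (a+1) (n+1) (childR true r) ≤ sSup (paySet (a+1) (n+1)) :=
        le_csSup hbdd1 ⟨_, hm1, rfl⟩
      rw [payR_split hX hn han hr0]
      refine le_max_of_le_right ?_
      linarith
  · apply max_le
    · refine le_csSup hbdd ⟨fun _ => True, massR_of_singleton (minstop_of_nil trivial),
        payR_of_singleton (minstop_of_nil trivial)⟩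
    · have key : ∀ ε > (0:ℝ),
          (sSup (paySet a (n+1)) + sSup (paySet (a+1) (n+1))) / 2 ≤ sSup (paySet a n) + ε := by
        intro ε hε
        obtain ⟨x0, ⟨r0, hmr0, hp0⟩, hx0⟩ :=
          exists_lt_of_lt_csSup hne0 (show sSup (paySet a (n+1)) - ε < sSup (paySet a (n+1)) by
            linarith)
        obtain ⟨x1, ⟨r1, hmr1, hp1⟩, hx1⟩ :=
          exists_lt_of_lt_csSup hne1
            (show sSup (paySet (a+1) (n+1)) - ε < sSup (paySet (a+1) (n+1)) by linarith)
        have hcmem : payR a n (combine r0 r1) ∈ paySet a n :=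
          ⟨combine r0 r1, combine_mass hX hmr0 hmr1, rfl⟩
        have hcle : payR a n (combine r0 r1) ≤ sSup (paySet a n) := le_csSup hbdd hcmem
        rw [combine_pay hX hn han r0 r1, hp0, hp1] at hcle
        linarith
      by_contra hcon
      push_neg at hcon
      have := key ((((sSup (paySet a (n+1)) + sSup (paySet (a+1) (n+1))) / 2)
        - sSup (paySet a n)) / 2) (by linarith)
      linarith

end Recursion

end CRaux

/-- The backward recursion `V(a,n) = max(a/n, (V(a,n+1) + V(a+1,n+1))/2)`. -/
theorem gameValue_recursion {Ω : Type*} [MeasurableSpace Ω] (μ : Measure Ω)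
    [IsProbabilityMeasure μ] (X : ℕ → Ω → ℝ) (hX : IsFairCoinSeq μ X)
    (a n : ℕ) (hn : 1 ≤ n) (han : a ≤ n) :
    gameValue μ X a n =
      max ((a : ℝ) / n) ((gameValue μ X a (n + 1) + gameValue μ X (a + 1) (n + 1)) / 2) := by
  rw [CRaux.gameValue_eq_sSup hX hn han,
    CRaux.gameValue_eq_sSup hX (by omega : 1 ≤ n + 1) (by omega : a ≤ n + 1),
    CRaux.gameValue_eq_sSup hX (by omega : 1 ≤ n + 1) (by omega : a + 1 ≤ n + 1)]
  exact CRaux.sSup_paySet_recursion hX hn han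
end

section
/- In the Chow–Robbins game, at a fixed difference between the number of heads and the number of tails, continuing being optimal is upward-closed in the number of flips: if (a,n) and (a',n') are positions with 2a − n = 2a' − n' and n ≤ n', and if V(a,n) > a/n (continuing is strictly better than stopping at (a,n)), then V(a',n') > a'/n'. Equivalently, for each fixed difference d = 2a − n, there is a threshold such that stopping is optimal exactly when the total number of flips is below it. -/
open MeasureTheory ProbabilityTheory Real
open scoped Classical NNReal ENNReal

section Walk
variable {Ω : Type*} (X : ℕ → Ω → ℝ)

/-- The centered walk `D_k = 2 S_k - k`. -/
noncomputable def dZ (k : ℕ) (ω : Ω) : ℝ := 2 * (∑ i ∈ Finset.range k, X i ω) - k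

variable {X}

lemma dZ_zero (ω : Ω) : dZ X 0 ω = 0 := by simp [dZ]

lemma dZ_succ (k : ℕ) (ω : Ω) : dZ X (k+1) ω = dZ X k ω + (2 * X k ω - 1) := by
  simp [dZ, Finset.sum_range_succ]; push_cast; ring

lemma abs_step (h01 : ∀ i ω, X i ω = 0 ∨ X i ω = 1) (k : ℕ) (ω : Ω) :
    |2 * X k ω - 1| = 1 := by
  rcases h01 k ω with h | h <;> rw [h] <;> norm_num

lemma abs_dZ_le (h01 : ∀ i ω, X i ω = 0 ∨ X i ω = 1) (k : ℕ) (ω : Ω) :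
    |dZ X k ω| ≤ k := by
  induction k with
  | zero => simp [dZ_zero]
  | succ k ih =>
      rw [dZ_succ]
      calc |dZ X k ω + (2 * X k ω - 1)| ≤ |dZ X k ω| + |2 * X k ω - 1| := abs_add_le _ _
        _ ≤ k + 1 := by rw [abs_step h01]; exact add_le_add_left ih 1
        _ = ((k+1 : ℕ) : ℝ) := by push_cast; ring

lemma coinFiltration_mono {j k : ℕ} (h : j ≤ k) :
    coinFiltration X j ≤ coinFiltration X k := by
  refine iSup_le fun i => iSup_le fun hi => ?_
  exact le_iSup₂ (f := fun i (_ : i ∈ Finset.range k) => MeasurableSpace.comap (X i) inferInstance)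
    i (Finset.mem_range.2 (lt_of_lt_of_le (Finset.mem_range.1 hi) h))

lemma coinFiltration_le {m0 : MeasurableSpace Ω} (hm : ∀ i, Measurable (X i)) (k : ℕ) :
    coinFiltration X k ≤ m0 := by
  refine iSup_le fun i => iSup_le fun _ => ?_
  exact (hm i).comap_le

lemma measurable_X_coin {i k : ℕ} (h : i < k) :
    Measurable[coinFiltration X k] (X i) := by
  rw [measurable_iff_comap_le]
  exact le_iSup₂ (f := fun i (_ : i ∈ Finset.range k) => MeasurableSpace.comap (X i) inferInstance)
    i (Finset.mem_range.2 h)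

lemma measurable_dZ_coin {j k : ℕ} (h : j ≤ k) :
    Measurable[coinFiltration X k] (dZ X j) := by
  have : Measurable[coinFiltration X k] fun ω => (∑ i ∈ Finset.range j, X i ω) := by
    apply Finset.measurable_sum
    intro i hi
    exact measurable_X_coin (lt_of_lt_of_le (Finset.mem_range.1 hi) h)
  exact (this.const_mul 2).sub measurable_const

lemma measurable_dZ {m0 : MeasurableSpace Ω} (hm : ∀ i, Measurable (X i)) (j : ℕ) :
    Measurable (dZ X j) :=
  ((Finset.measurable_sum _ fun i _ => hm i).const_mul 2).sub measurable_const

end Walk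

section Indep
variable {Ω : Type*} [m0 : MeasurableSpace Ω] {μ : Measure Ω} [IsProbabilityMeasure μ]
  {X : ℕ → Ω → ℝ}

lemma integral_step_zero (hX : IsFairCoinSeq μ X) (k : ℕ) :
    ∫ ω, (2 * X k ω - 1) ∂μ = 0 := by
  obtain ⟨hm, h01, hhalf, -⟩ := hX
  have hXk : (X k) = Set.indicator {ω | X k ω = 1} (fun _ => (1:ℝ)) := by
    funext ω
    rcases h01 k ω with h | h <;>
      simp [Set.indicator_apply, Set.mem_setOf_eq, h]
  have hs : MeasurableSet {ω | X k ω = 1} := (hm k) (measurableSet_singleton 1)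
  have hint : Integrable (X k) μ := by
    rw [hXk]
    exact (integrable_const (1:ℝ)).indicator hs
  have hIX : ∫ ω, X k ω ∂μ = 1/2 := by
    rw [hXk, integral_indicator_const (1:ℝ) hs, measureReal_def, hhalf k]
    simp [ENNReal.toReal_div]
  rw [integral_sub ((hint.const_mul 2)) (integrable_const 1)]
  rw [integral_const_mul, hIX]
  simp

/-- Key independence computation: for `B` in the σ-algebra of the first `k` flips,
`∫ 1_B (2 X k - 1) = 0`. -/
lemma integral_indicator_step_zero (hX : IsFairCoinSeq μ X) {k : ℕ} {B : Set Ω}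
    (hB : MeasurableSet[coinFiltration X k] B) :
    ∫ ω, Set.indicator B (fun ω => 2 * X k ω - 1) ω ∂μ = 0 := by
  obtain ⟨hm, h01, hhalf, hind⟩ := hX
  set S : Finset ℕ := Finset.range k with hS
  set T : Finset ℕ := {k} with hT
  have hST : Disjoint S T := by
    simp [hS, hT, Finset.disjoint_singleton_right]
  have base : IndepFun (fun ω (i : S) => X i ω) (fun ω (i : T) => X i ω) μ :=
    hind.indepFun_finset S T hST hm
  -- B is a preimage under the tuple map
  have hle : coinFiltration X k ≤
      MeasurableSpace.comap (fun ω (i : S) => X i ω) MeasurableSpace.pi := by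
    refine iSup_le fun i => iSup_le fun hi => ?_
    have : MeasurableSpace.comap (X i) inferInstance =
        MeasurableSpace.comap (fun ω (j : S) => X j ω)
          (MeasurableSpace.comap (fun v : S → ℝ => v ⟨i, hi⟩) inferInstance) := by
      rw [MeasurableSpace.comap_comp]
      rfl
    rw [this]
    exact MeasurableSpace.comap_mono (measurable_pi_apply _).comap_le
  obtain ⟨B', hB', rfl⟩ := hle B hB
  have hkT : k ∈ T := by simp [hT]
  set φ : (S → ℝ) → ℝ := Set.indicator B' (fun _ => (1:ℝ)) with hφdef
  set ψ : (T → ℝ) → ℝ := fun v => 2 * v ⟨k, hkT⟩ - 1 with hψdef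
  have hφ : Measurable φ := (measurable_const.indicator hB')
  have hψ : Measurable ψ := ((measurable_pi_apply _).const_mul 2).sub measurable_const
  have hIF : IndepFun (φ ∘ fun ω (i : S) => X i ω) (ψ ∘ fun ω (i : T) => X i ω) μ :=
    base.comp hφ hψ
  have hfun1 : (φ ∘ fun ω (i : S) => X i ω) =
      Set.indicator ((fun ω (i : S) => X i ω) ⁻¹' B') (fun _ => (1:ℝ)) := by
    funext ω
    simp only [Function.comp_apply, hφdef, Set.indicator_apply, Set.mem_preimage]
  have hfun2 : (ψ ∘ fun ω (i : T) => X i ω) = fun ω => 2 * X k ω - 1 := by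
    funext ω; simp [hψdef]
  rw [hfun1, hfun2] at hIF
  have hBmeas : MeasurableSet ((fun ω (i : S) => X i ω) ⁻¹' B') := by
    have : Measurable (fun ω (i : S) => X i ω) := measurable_pi_lambda _ fun i => hm i
    exact this hB'
  have hint1 : Integrable (Set.indicator ((fun ω (i : S) => X i ω) ⁻¹' B') (fun _ => (1:ℝ))) μ :=
    (integrable_const (1:ℝ)).indicator hBmeas
  have hstep_meas : Measurable (fun ω => 2 * X k ω - 1) := ((hm k).const_mul 2).sub measurable_const
  have hint2 : Integrable (fun ω => 2 * X k ω - 1) μ := by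
    refine (integrable_const (1:ℝ)).mono' hstep_meas.aestronglyMeasurable ?_
    filter_upwards with ω
    rw [Real.norm_eq_abs, abs_step h01]
  have key : ∫ ω, (Set.indicator ((fun ω (i : S) => X i ω) ⁻¹' B') (fun _ => (1:ℝ)) ω
      * (2 * X k ω - 1)) ∂μ
      = (∫ ω, Set.indicator ((fun ω (i : S) => X i ω) ⁻¹' B') (fun _ => (1:ℝ)) ω ∂μ)
        * ∫ ω, (2 * X k ω - 1) ∂μ :=
    hIF.integral_fun_mul_eq_mul_integral hint1.aestronglyMeasurable hint2.aestronglyMeasurable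
  have heq : (fun ω => Set.indicator ((fun ω (i : S) => X i ω) ⁻¹' B') (fun _ => (1:ℝ)) ω
      * (2 * X k ω - 1)) =
      Set.indicator ((fun ω (i : S) => X i ω) ⁻¹' B') (fun ω => 2 * X k ω - 1) := by
    funext ω
    by_cases hω : ω ∈ ((fun ω (i : S) => X i ω) ⁻¹' B') <;>
      simp [Set.indicator_apply, hω]
  rw [← heq, key, integral_step_zero ⟨hm, h01, hhalf, hind⟩, mul_zero]

end Indep
section Stopped
variable {Ω : Type*} {X : ℕ → Ω → ℝ}

variable (X) in
/-- The walk stopped upon first reaching level `L`. -/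
noncomputable def zProc (L k : ℕ) (ω : Ω) : ℝ :=
  if h : ∃ j, j ≤ k ∧ (L:ℝ) ≤ dZ X j ω then dZ X (Nat.find h) ω else dZ X k ω

lemma zProc_zero (L : ℕ) (ω : Ω) : zProc X L 0 ω = 0 := by
  unfold zProc
  split
  · rename_i h
    have h0 : Nat.find h = 0 := Nat.le_zero.1 (Nat.find_spec h).1
    rw [h0]; exact dZ_zero ω
  · exact dZ_zero ω

lemma zProc_succ (L k : ℕ) (ω : Ω) :
    zProc X L (k+1) ω = zProc X L k ω +
      Set.indicator {ω | ∀ j ≤ k, dZ X j ω < (L:ℝ)} (fun ω => 2 * X k ω - 1) ω := by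
  by_cases hA : ∀ j ≤ k, dZ X j ω < (L:ℝ)
  · have hne : ¬ ∃ j, j ≤ k ∧ (L:ℝ) ≤ dZ X j ω := by
      push_neg; intro j hj; exact hA j hj
    have hzk : zProc X L k ω = dZ X k ω := dif_neg hne
    have hind : Set.indicator {ω | ∀ j ≤ k, dZ X j ω < (L:ℝ)} (fun ω => 2 * X k ω - 1) ω
        = 2 * X k ω - 1 := Set.indicator_of_mem (by exact hA) _
    rw [hzk, hind]
    by_cases h2 : ∃ j, j ≤ k + 1 ∧ (L:ℝ) ≤ dZ X j ω
    · have hfind : Nat.find h2 = k + 1 := by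
        by_contra hne
        have hlt : Nat.find h2 ≤ k := by have := (Nat.find_spec h2).1; omega
        exact absurd (Nat.find_spec h2).2 (not_le.2 (hA _ hlt))
      rw [zProc, dif_pos h2, hfind, dZ_succ]
    · rw [zProc, dif_neg h2, dZ_succ]
  · push_neg at hA
    obtain ⟨j₀, hj₀, hLj₀⟩ := hA
    have h1 : ∃ j, j ≤ k ∧ (L:ℝ) ≤ dZ X j ω := ⟨j₀, hj₀, hLj₀⟩
    have h2 : ∃ j, j ≤ k + 1 ∧ (L:ℝ) ≤ dZ X j ω := ⟨j₀, hj₀.trans (Nat.le_succ k), hLj₀⟩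
    have hfind : Nat.find h2 = Nat.find h1 := by
      apply le_antisymm
      · exact Nat.find_min' h2 ⟨(Nat.find_spec h1).1.trans (Nat.le_succ k), (Nat.find_spec h1).2⟩
      · refine Nat.find_min' h1 ⟨?_, (Nat.find_spec h2).2⟩
        exact le_trans (Nat.find_min' h2 ⟨hj₀.trans (Nat.le_succ k), hLj₀⟩) hj₀
    have hind : Set.indicator {ω | ∀ j ≤ k, dZ X j ω < (L:ℝ)} (fun ω => 2 * X k ω - 1) ω
        = 0 := by
      apply Set.indicator_of_notMem
      intro hmem
      exact absurd hLj₀ (not_le.2 (hmem j₀ hj₀))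
    rw [hind, add_zero, zProc, zProc, dif_pos h1, dif_pos h2, hfind]

lemma zProc_cases (L k : ℕ) (ω : Ω) : ∃ j ≤ k, zProc X L k ω = dZ X j ω := by
  unfold zProc
  split
  · rename_i h
    exact ⟨Nat.find h, (Nat.find_spec h).1, rfl⟩
  · exact ⟨k, le_rfl, rfl⟩

lemma abs_zProc_le (h01 : ∀ i ω, X i ω = 0 ∨ X i ω = 1) (L k : ℕ) (ω : Ω) :
    |zProc X L k ω| ≤ k := by
  obtain ⟨j, hj, hz⟩ := zProc_cases L k ω
  rw [hz]
  exact le_trans (abs_dZ_le h01 j ω) (by exact_mod_cast hj)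

lemma zProc_le (h01 : ∀ i ω, X i ω = 0 ∨ X i ω = 1) (L k : ℕ) (ω : Ω) :
    zProc X L k ω ≤ (L:ℝ) + 1 := by
  unfold zProc
  split
  · rename_i h
    rcases Nat.eq_zero_or_eq_succ_pred (Nat.find h) with h0 | hs
    · rw [h0, dZ_zero]; positivity
    · set m := Nat.find h - 1 with hm
      have hfind : Nat.find h = m + 1 := hs
      have hmlt : m < Nat.find h := by omega
      have hnot := Nat.find_min h hmlt
      push_neg at hnot
      have hmk : m ≤ k := by
        have := (Nat.find_spec h).1; omega
      have hdm : dZ X m ω < L := hnot hmk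
      have hstep : 2 * X m ω - 1 ≤ 1 := by
        have := abs_step h01 m ω
        have := abs_le.1 (le_of_eq this)
        linarith [this.2]
      rw [hfind, dZ_succ]
      linarith
  · rename_i h
    push_neg at h
    have := h k le_rfl
    linarith

lemma measurableSet_noHit (L k : ℕ) :
    MeasurableSet[coinFiltration X k] {ω | ∀ j ≤ k, dZ X j ω < (L:ℝ)} := by
  have : {ω : Ω | ∀ j ≤ k, dZ X j ω < (L:ℝ)} =
      ⋂ j ∈ Finset.range (k+1), {ω | dZ X j ω < (L:ℝ)} := by
    ext ω; simp [Nat.lt_succ_iff]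
  rw [this]
  refine Finset.measurableSet_biInter _ fun j hj => ?_
  exact measurableSet_lt (measurable_dZ_coin (Nat.lt_succ_iff.1 (Finset.mem_range.1 hj)))
    measurable_const

lemma measurable_zProc_coin (L k : ℕ) :
    Measurable[coinFiltration X k] (zProc X L k) := by
  induction k with
  | zero =>
      have : zProc X L 0 = fun _ => (0:ℝ) := funext (zProc_zero L)
      rw [this]; exact measurable_const
  | succ k ih =>
      have : zProc X L (k+1) = fun ω => zProc X L k ω +
          Set.indicator {ω | ∀ j ≤ k, dZ X j ω < (L:ℝ)} (fun ω => 2 * X k ω - 1) ω :=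
        funext (zProc_succ L k)
      rw [this]
      have h1 : Measurable[coinFiltration X (k+1)] (zProc X L k) :=
        ih.mono (coinFiltration_mono (Nat.le_succ k)) le_rfl
      have h2 : Measurable[coinFiltration X (k+1)] (fun ω => 2 * X k ω - 1) :=
        ((measurable_X_coin (Nat.lt_succ_self k)).const_mul 2).sub measurable_const
      have h3 : MeasurableSet[coinFiltration X (k+1)] {ω | ∀ j ≤ k, dZ X j ω < (L:ℝ)} :=
        coinFiltration_mono (Nat.le_succ k) _ (measurableSet_noHit L k)
      exact h1.add (h2.indicator h3)

end Stopped

section Mart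
variable {Ω : Type*} [m0 : MeasurableSpace Ω] {μ : Measure Ω} [IsProbabilityMeasure μ]
  {X : ℕ → Ω → ℝ}

lemma integrable_zProc (hX : IsFairCoinSeq μ X) (L k : ℕ) :
    Integrable (zProc X L k) μ := by
  refine (integrable_const (k:ℝ)).mono'
    (((measurable_zProc_coin L k).mono (coinFiltration_le hX.1 k) le_rfl).aestronglyMeasurable) ?_
  filter_upwards with ω
  rw [Real.norm_eq_abs]
  exact abs_zProc_le hX.2.1 L k ω

lemma integrable_indicator_step (hX : IsFairCoinSeq μ X) (L k : ℕ) :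
    Integrable (Set.indicator {ω | ∀ j ≤ k, dZ X j ω < (L:ℝ)} (fun ω => 2 * X k ω - 1)) μ := by
  have hms : MeasurableSet {ω : Ω | ∀ j ≤ k, dZ X j ω < (L:ℝ)} :=
    coinFiltration_le hX.1 k _ (measurableSet_noHit L k)
  have hstep : Integrable (fun ω => 2 * X k ω - 1) μ := by
    refine (integrable_const (1:ℝ)).mono'
      (((hX.1 k).const_mul 2).sub measurable_const).aestronglyMeasurable ?_
    filter_upwards with ω
    rw [Real.norm_eq_abs, abs_step hX.2.1]
  exact hstep.indicator hms

/-- The coin filtration, as a `Filtration`. -/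
def coinFil (hm : ∀ i, Measurable (X i)) : Filtration ℕ m0 :=
  ⟨fun k => coinFiltration X k, fun _ _ h => coinFiltration_mono h, fun k => coinFiltration_le hm k⟩

lemma zProc_submartingale (hX : IsFairCoinSeq μ X) (L : ℕ) :
    Submartingale (zProc X L) (coinFil hX.1) μ := by
  refine submartingale_of_setIntegral_le_succ
    (fun k => (measurable_zProc_coin L k).stronglyMeasurable)
    (fun k => integrable_zProc hX L k) (fun i s hs => ?_)
  have hms : MeasurableSet s := coinFiltration_le hX.1 i _ hs
  have heq : ∀ ω, zProc X L (i+1) ω = zProc X L i ω +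
      Set.indicator {ω | ∀ j ≤ i, dZ X j ω < (L:ℝ)} (fun ω => 2 * X i ω - 1) ω :=
    zProc_succ L i
  have h2 : ∫ ω in s, zProc X L (i+1) ω ∂μ = ∫ ω in s, zProc X L i ω ∂μ +
      ∫ ω in s, Set.indicator {ω | ∀ j ≤ i, dZ X j ω < (L:ℝ)} (fun ω => 2 * X i ω - 1) ω ∂μ := by
    rw [← integral_add ((integrable_zProc hX L i).integrableOn)
      ((integrable_indicator_step hX L i).integrableOn)]
    exact setIntegral_congr_fun hms fun ω _ => heq ω
  rw [h2]
  have h3 : ∫ ω in s, Set.indicator {ω | ∀ j ≤ i, dZ X j ω < (L:ℝ)}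
      (fun ω => 2 * X i ω - 1) ω ∂μ = 0 := by
    rw [← integral_indicator hms, Set.indicator_indicator]
    exact integral_indicator_step_zero hX (MeasurableSet.inter hs (measurableSet_noHit L i))
  rw [h3, add_zero]

lemma integral_zProc_zero (hX : IsFairCoinSeq μ X) (L k : ℕ) :
    ∫ ω, zProc X L k ω ∂μ = 0 := by
  induction k with
  | zero =>
      have : zProc X L 0 = fun _ => (0:ℝ) := funext (zProc_zero L)
      rw [this, integral_zero]
  | succ k ih =>
      have heq : ∀ ω, zProc X L (k+1) ω = zProc X L k ω +
          Set.indicator {ω | ∀ j ≤ k, dZ X j ω < (L:ℝ)} (fun ω => 2 * X k ω - 1) ω :=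
        zProc_succ L k
      rw [integral_congr_ae (Filter.Eventually.of_forall heq),
        integral_add (integrable_zProc hX L k) (integrable_indicator_step hX L k), ih,
        integral_indicator_step_zero hX (measurableSet_noHit L k), add_zero]

lemma eLpNorm_zProc_le (hX : IsFairCoinSeq μ X) (L k : ℕ) :
    eLpNorm (zProc X L k) 1 μ ≤ ENNReal.ofReal (2 * (L:ℝ) + 2) := by
  have hint := integrable_zProc hX L k
  have habs : ∀ ω, |zProc X L k ω| = 2 * max (zProc X L k ω) 0 - zProc X L k ω := by
    intro ω
    rcases le_total 0 (zProc X L k ω) with h | h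
    · rw [abs_of_nonneg h, max_eq_left h]; ring
    · rw [abs_of_nonpos h, max_eq_right h]; ring
  have hmax_int : Integrable (fun ω => max (zProc X L k ω) 0) μ := hint.pos_part
  have hmax_le : ∀ ω, max (zProc X L k ω) 0 ≤ (L:ℝ) + 1 := by
    intro ω
    exact max_le (zProc_le hX.2.1 L k ω) (by positivity)
  have h1 : ∫ ω, ‖zProc X L k ω‖ ∂μ ≤ 2 * (L:ℝ) + 2 := by
    calc ∫ ω, ‖zProc X L k ω‖ ∂μ
        = ∫ ω, (2 * max (zProc X L k ω) 0 - zProc X L k ω) ∂μ := by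
          refine integral_congr_ae (Filter.Eventually.of_forall fun ω => ?_)
          show ‖zProc X L k ω‖ = 2 * max (zProc X L k ω) 0 - zProc X L k ω
          rw [Real.norm_eq_abs]; exact habs ω
      _ = 2 * ∫ ω, max (zProc X L k ω) 0 ∂μ - ∫ ω, zProc X L k ω ∂μ := by
          rw [integral_sub (hmax_int.const_mul 2) hint, integral_const_mul]
      _ = 2 * ∫ ω, max (zProc X L k ω) 0 ∂μ := by rw [integral_zProc_zero hX, sub_zero]
      _ ≤ 2 * ((L:ℝ) + 1) := by
          have h := integral_mono hmax_int (integrable_const ((L:ℝ)+1)) (fun ω => hmax_le ω)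
          rw [integral_const] at h
          simp only [measure_univ, probReal_univ, ENNReal.toReal_one, smul_eq_mul, one_mul] at h
          linarith
      _ = 2 * (L:ℝ) + 2 := by ring
  calc eLpNorm (zProc X L k) 1 μ = ∫⁻ ω, ‖zProc X L k ω‖ₑ ∂μ := by
        rw [eLpNorm_one_eq_lintegral_enorm]
    _ = ENNReal.ofReal (∫ ω, ‖zProc X L k ω‖ ∂μ) :=
        (ofReal_integral_norm_eq_lintegral_enorm hint).symm
    _ ≤ ENNReal.ofReal (2 * (L:ℝ) + 2) := ENNReal.ofReal_le_ofReal h1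

/-- Almost surely, the walk `dZ` exceeds every level. -/
lemma ae_hits (hX : IsFairCoinSeq μ X) :
    ∀ᵐ ω ∂μ, ∀ L : ℕ, ∃ j : ℕ, (L:ℝ) ≤ dZ X j ω := by
  rw [ae_all_iff]
  intro L
  have hsub := zProc_submartingale hX L
  set R : ℝ≥0 := ⟨2*(L:ℝ)+2, by positivity⟩ with hR
  have hbdd : ∀ k, eLpNorm (zProc X L k) 1 μ ≤ (R : ℝ≥0∞) := by
    intro k
    refine (eLpNorm_zProc_le hX L k).trans_eq ?_
    have : ((R:ℝ≥0):ℝ) = 2*(L:ℝ)+2 := rfl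
    rw [← this, ENNReal.ofReal_coe_nnreal]
  filter_upwards [hsub.exists_ae_tendsto_of_bdd hbdd] with ω hc
  by_contra hno
  push_neg at hno
  have hZeq : ∀ k, zProc X L k ω = dZ X k ω := by
    intro k
    refine dif_neg ?_
    push_neg
    intro j _
    exact hno j
  obtain ⟨c, hc⟩ := hc
  simp_rw [hZeq] at hc
  have h1 : Filter.Tendsto (fun k => dZ X (k+1) ω - dZ X k ω) Filter.atTop (nhds 0) := by
    have := (hc.comp (Filter.tendsto_add_atTop_nat 1)).sub hc
    simpa using this
  have h2 := (NormedAddCommGroup.tendsto_nhds_zero.mp h1) 1 one_pos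
  obtain ⟨k, hk⟩ := h2.exists
  rw [dZ_succ, Real.norm_eq_abs] at hk
  simp only [add_sub_cancel_left] at hk
  rw [abs_step hX.2.1] at hk
  exact absurd hk (lt_irrefl 1)

end Mart

section Assemble
variable {Ω : Type*} [m0 : MeasurableSpace Ω] {μ : Measure Ω} [IsProbabilityMeasure μ]
  {X : ℕ → Ω → ℝ}

lemma measurable_stopped (e : Ω → ℕ∞)
    (he : ∀ k : ℕ, MeasurableSet {ω | e ω ≤ (k:ℕ∞)}) (G : ℕ → Ω → ℝ)
    (hG : ∀ j, Measurable (G j)) : Measurable fun ω => G (e ω).toNat ω := by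
  have htop : MeasurableSet {ω | e ω = ⊤} := by
    have : {ω | e ω = ⊤} = (⋃ k : ℕ, {ω | e ω ≤ (k:ℕ∞)})ᶜ := by
      ext ω
      simp only [Set.mem_setOf_eq, Set.mem_compl_iff, Set.mem_iUnion, not_exists]
      constructor
      · intro hh k h
        rw [hh] at h
        exact ENat.coe_ne_top k (top_le_iff.1 h)
      · intro h
        by_contra hne
        exact h (e ω).toNat (le_of_eq (ENat.coe_toNat hne).symm)
    rw [this]
    exact (MeasurableSet.iUnion fun k => he k).compl
  have heN : Measurable fun ω => (e ω).toNat := by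
    apply measurable_to_countable'
    intro j
    match j with
    | 0 =>
        have : (fun ω => (e ω).toNat) ⁻¹' {0} = {ω | e ω ≤ (0:ℕ∞)} ∪ {ω | e ω = ⊤} := by
          ext ω
          simp only [Set.mem_preimage, Set.mem_singleton_iff, Set.mem_union, Set.mem_setOf_eq]
          constructor
          · intro h
            by_cases hne : e ω = ⊤
            · exact Or.inr hne
            · left
              rw [← ENat.coe_toNat hne, h]
              exact le_rfl
          · rintro (h | h)
            · have : e ω = 0 := le_antisymm (by exact_mod_cast h) zero_le
              rw [this]; rfl
            · rw [h]; rfl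
        rw [this]
        exact (he 0).union htop
    | (j+1) =>
        have : (fun ω => (e ω).toNat) ⁻¹' {j+1} =
            {ω | e ω ≤ ((j+1:ℕ):ℕ∞)} \ {ω | e ω ≤ (j:ℕ∞)} := by
          ext ω
          simp only [Set.mem_preimage, Set.mem_singleton_iff, Set.mem_diff, Set.mem_setOf_eq]
          constructor
          · intro h
            have hne : e ω ≠ ⊤ := by
              intro htop'
              rw [htop'] at h
              simp at h
            rw [← ENat.coe_toNat hne, h]
            constructor
            · exact_mod_cast le_rfl
            · intro hc
              have : j + 1 ≤ j := by exact_mod_cast hc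
              omega
          · rintro ⟨h1, h2⟩
            have hne : e ω ≠ ⊤ := by
              intro htop'
              rw [htop'] at h1
              exact ENat.coe_ne_top _ (top_le_iff.1 h1)
            rw [← ENat.coe_toNat hne] at h1 h2
            have ha : (e ω).toNat ≤ j + 1 := by exact_mod_cast h1
            have hb : ¬ (e ω).toNat ≤ j := fun hc => h2 (by exact_mod_cast hc)
            omega
        rw [this]
        exact (he (j+1)).diff (he j)
  have hunc : Measurable (fun p : Ω × ℕ => G p.2 p.1) :=
    measurable_from_prod_countable_left (fun j => hG j)
  exact hunc.comp (measurable_id.prodMk heN)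

lemma payoff_abs_le_one (h01 : ∀ i ω, X i ω = 0 ∨ X i ω = 1) {a n : ℕ} (hn : 1 ≤ n)
    (han : a ≤ n) (k : ℕ) (ω : Ω) : |headsProp X a n k ω| ≤ 1 := by
  have hS0 : 0 ≤ ∑ i ∈ Finset.range k, X i ω :=
    Finset.sum_nonneg fun i _ => by rcases h01 i ω with h | h <;> simp [h]
  have hSk : ∑ i ∈ Finset.range k, X i ω ≤ k := by
    calc ∑ i ∈ Finset.range k, X i ω ≤ ∑ i ∈ Finset.range k, 1 :=
          Finset.sum_le_sum fun i _ => by rcases h01 i ω with h | h <;> simp [h]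
      _ = k := by simp
  have hden : (0:ℝ) < (n:ℝ) + k := by
    have : (1:ℝ) ≤ n := by exact_mod_cast hn
    positivity
  rw [headsProp, abs_div, abs_of_pos hden, div_le_one hden, abs_of_nonneg (by positivity)]
  have : (a:ℝ) ≤ n := by exact_mod_cast han
  linarith

lemma gameValue_bddAbove (h01 : ∀ i ω, X i ω = 0 ∨ X i ω = 1) {a n : ℕ} (hn : 1 ≤ n)
    (han : a ≤ n) :
    BddAbove (Set.range fun τ : {τ : Ω → ℕ∞ // IsAEFiniteStoppingTime μ X τ} =>
      ∫ ω, headsProp X a n ((τ.1 ω).toNat) ω ∂μ) := by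
  refine ⟨1, ?_⟩
  rintro x ⟨τ, rfl⟩
  have := norm_integral_le_of_norm_le_const (μ := μ) (C := 1)
    (f := fun ω => headsProp X a n ((τ.1 ω).toNat) ω)
    (Filter.Eventually.of_forall fun ω => by
      rw [Real.norm_eq_abs]; exact payoff_abs_le_one h01 hn han _ ω)
  rw [probReal_univ, mul_one] at this
  exact le_trans (le_abs_self _) this

instance stoppingTimeNonempty : Nonempty {τ : Ω → ℕ∞ // IsAEFiniteStoppingTime μ X τ} := by
  refine ⟨⟨fun _ => 0, fun k => ?_, ?_⟩⟩
  · have : {ω : Ω | (0:ℕ∞) ≤ (k:ℕ∞)} = Set.univ := by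
      ext ω; simp
    rw [this]
    exact MeasurableSet.univ
  · have : {ω : Ω | (0:ℕ∞) = ⊤} = ∅ := by
      ext ω; simp
    rw [this]
    exact measure_empty

end Assemble

section Final
variable {Ω : Type*} [m0 : MeasurableSpace Ω] {μ : Measure Ω} [IsProbabilityMeasure μ]
  {X : ℕ → Ω → ℝ}

lemma gStop_abs_le (h01 : ∀ i ω, X i ω = 0 ∨ X i ω = 1) (d : ℤ) {c : ℕ} (hc : 1 ≤ c)
    (j : ℕ) (ω : Ω) : |((d:ℝ) + dZ X j ω)/((c:ℝ) + j)| ≤ |(d:ℝ)| + 1 := by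
  have hc1 : (1:ℝ) ≤ c := by exact_mod_cast hc
  have hden : (0:ℝ) < (c:ℝ) + j := by
    have : (0:ℝ) ≤ j := Nat.cast_nonneg j
    linarith
  rw [abs_div, abs_of_pos hden, div_le_iff₀ hden]
  have h1 : |(d:ℝ) + dZ X j ω| ≤ |(d:ℝ)| + j :=
    le_trans (abs_add_le _ _) (by linarith [abs_dZ_le h01 j ω])
  have : (0:ℝ) ≤ j := Nat.cast_nonneg j
  nlinarith [abs_nonneg ((d:ℝ))]

lemma integrable_gStop (hX : IsFairCoinSeq μ X) (d : ℤ) {c : ℕ} (hc : 1 ≤ c) (e : Ω → ℕ∞)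
    (he : ∀ k : ℕ, MeasurableSet {ω | e ω ≤ (k:ℕ∞)}) :
    Integrable (fun ω => ((d:ℝ) + dZ X (e ω).toNat ω)/((c:ℝ) + (e ω).toNat)) μ := by
  have hmeas : Measurable fun ω => ((d:ℝ) + dZ X (e ω).toNat ω)/((c:ℝ) + (e ω).toNat) := by
    refine measurable_stopped e he (fun j ω => ((d:ℝ) + dZ X j ω)/((c:ℝ) + j)) fun j => ?_
    exact (measurable_const.add (measurable_dZ hX.1 j)).div_const _
  refine (integrable_const (|(d:ℝ)| + 1)).mono' hmeas.aestronglyMeasurable ?_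
  filter_upwards with ω
  rw [Real.norm_eq_abs]
  exact gStop_abs_le hX.2.1 d hc _ ω

lemma headsProp_eq {a n : ℕ} {d : ℤ} (hd : 2*(a:ℤ) - n = d) (hn : 1 ≤ n) (k : ℕ) (ω : Ω) :
    headsProp X a n k ω = 1/2 + ((d:ℝ) + dZ X k ω)/((n:ℝ)+k)/2 := by
  have hn1 : (1:ℝ) ≤ n := by exact_mod_cast hn
  have hden : (0:ℝ) < (n:ℝ) + k := by
    have : (0:ℝ) ≤ k := Nat.cast_nonneg k
    linarith
  have had : 2*(a:ℝ) = (n:ℝ) + (d:ℝ) := by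
    have := congrArg (Int.cast : ℤ → ℝ) hd
    push_cast at this
    linarith
  rw [headsProp, dZ]
  field_simp
  ring_nf
  linear_combination had

end Final

/-- At fixed difference (heads minus tails), "continuing is strictly better than
stopping" is upward-closed in the number of flips. -/
theorem continue_upward_closed {Ω : Type*} [MeasurableSpace Ω] (μ : Measure Ω)
    [IsProbabilityMeasure μ] (X : ℕ → Ω → ℝ) (hX : IsFairCoinSeq μ X)
    (a n a' n' : ℕ) (hn : 1 ≤ n) (han : a ≤ n) (hn' : 1 ≤ n') (han' : a' ≤ n')
    (hdiff : 2 * (a : ℤ) - n = 2 * (a' : ℤ) - n') (hle : n ≤ n')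
    (h : (a : ℝ) / n < gameValue μ X a n) :
    (a' : ℝ) / n' < gameValue μ X a' n' := by
  obtain ⟨hm, h01, hhalf, hind⟩ := hX
  have hX' : IsFairCoinSeq μ X := ⟨hm, h01, hhalf, hind⟩
  set d : ℤ := 2*(a:ℤ) - n with hd
  have hd' : 2*(a':ℤ) - n' = d := by rw [hd, ← hdiff]
  have hn1 : (1:ℝ) ≤ n := by exact_mod_cast hn
  have hn1' : (1:ℝ) ≤ n' := by exact_mod_cast hn'
  have hnn' : (n:ℝ) ≤ n' := by exact_mod_cast hle
  have hnpos : (0:ℝ) < n := by linarith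
  have hnpos' : (0:ℝ) < n' := by linarith
  have had : 2*(a:ℝ) = (n:ℝ) + (d:ℝ) := by
    have := congrArg (Int.cast : ℤ → ℝ) hd
    push_cast at this
    linarith
  have had' : 2*(a':ℝ) = (n':ℝ) + (d:ℝ) := by
    have := congrArg (Int.cast : ℤ → ℝ) hd'
    push_cast at this
    linarith
  -- Step A: extract a near-optimal stopping time
  obtain ⟨τ0, hτ0⟩ : ∃ τ0 : {τ : Ω → ℕ∞ // IsAEFiniteStoppingTime μ X τ},
      (a:ℝ)/n < ∫ ω, headsProp X a n ((τ0.1 ω).toNat) ω ∂μ := by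
    by_contra hcon
    push_neg at hcon
    exact absurd (ciSup_le hcon) (not_le.2 h)
  -- ∫ g1 > d / n
  have he0 : ∀ k : ℕ, MeasurableSet {ω | τ0.1 ω ≤ (k:ℕ∞)} :=
    fun k => coinFiltration_le hm k _ (τ0.2.1 k)
  have hint_g1 := integrable_gStop hX' d hn τ0.1 he0
  have hpay1 : ∀ ω, headsProp X a n ((τ0.1 ω).toNat) ω
      = 1/2 + ((d:ℝ) + dZ X ((τ0.1 ω).toNat) ω)/((n:ℝ)+((τ0.1 ω).toNat : ℕ))/2 :=
    fun ω => headsProp_eq hd.symm hn _ ω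
  have hI1 : ∫ ω, headsProp X a n ((τ0.1 ω).toNat) ω ∂μ
      = 1/2 + (∫ ω, ((d:ℝ) + dZ X ((τ0.1 ω).toNat) ω)/((n:ℝ)+((τ0.1 ω).toNat : ℕ)) ∂μ)/2 := by
    rw [integral_congr_ae (Filter.Eventually.of_forall hpay1),
      integral_add (integrable_const _) (hint_g1.div_const 2), integral_const]
    simp only [measure_univ, probReal_univ, ENNReal.toReal_one, smul_eq_mul, one_mul]
    rw [integral_div]
  have hg1 : (d:ℝ)/n < ∫ ω, ((d:ℝ) + dZ X ((τ0.1 ω).toNat) ω)/((n:ℝ)+((τ0.1 ω).toNat : ℕ)) ∂μ := by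
    have han_eq : (a:ℝ)/n = 1/2 + ((d:ℝ)/n)/2 := by
      field_simp
      linear_combination had
    rw [hI1, han_eq] at hτ0
    linarith
  -- Step B: the modified stopping time
  set τh : Ω → ℕ∞ := fun ω =>
    if hex : ∃ j:ℕ, τ0.1 ω ≤ (j:ℕ∞) ∧ 0 ≤ (d:ℝ) + dZ X j ω
    then ((Nat.find hex : ℕ) : ℕ∞) else ⊤ with hτh
  have hset : ∀ k:ℕ, {ω | τh ω ≤ (k:ℕ∞)} =
      ⋃ j ∈ Finset.range (k+1), ({ω | τ0.1 ω ≤ (j:ℕ∞)} ∩ {ω | 0 ≤ (d:ℝ) + dZ X j ω}) := by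
    intro k
    ext ω
    simp only [Set.mem_setOf_eq, Set.mem_iUnion, Set.mem_inter_iff, Finset.mem_range,
      Nat.lt_succ_iff, exists_prop]
    constructor
    · intro hωk
      rw [hτh] at hωk
      simp only at hωk
      by_cases hex : ∃ j:ℕ, τ0.1 ω ≤ (j:ℕ∞) ∧ 0 ≤ (d:ℝ) + dZ X j ω
      · rw [dif_pos hex] at hωk
        have hfk : Nat.find hex ≤ k := by exact_mod_cast hωk
        exact ⟨Nat.find hex, hfk, Nat.find_spec hex⟩
      · rw [dif_neg hex] at hωk
        exact absurd (top_le_iff.1 hωk) (ENat.coe_ne_top k)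
    · rintro ⟨j, hjk, hτj, hpos⟩
      have hex : ∃ j:ℕ, τ0.1 ω ≤ (j:ℕ∞) ∧ 0 ≤ (d:ℝ) + dZ X j ω := ⟨j, hτj, hpos⟩
      rw [hτh]
      simp only
      rw [dif_pos hex]
      have : Nat.find hex ≤ j := Nat.find_min' hex ⟨hτj, hpos⟩
      exact_mod_cast le_trans this hjk
  have hstop : ∀ k:ℕ, MeasurableSet[coinFiltration X k] {ω | τh ω ≤ (k:ℕ∞)} := by
    intro k
    rw [hset k]
    refine Finset.measurableSet_biUnion _ fun j hj => ?_
    have hjk : j ≤ k := Nat.lt_succ_iff.1 (Finset.mem_range.1 hj)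
    refine MeasurableSet.inter ?_ ?_
    · exact coinFiltration_mono hjk _ (τ0.2.1 j)
    · exact measurableSet_le measurable_const (measurable_const.add (measurable_dZ_coin hjk))
  -- existence of the modified time on the good set
  have hex_of : ∀ ω, τ0.1 ω ≠ ⊤ → (∀ L:ℕ, ∃ j:ℕ, (L:ℝ) ≤ dZ X j ω) →
      ∃ j:ℕ, τ0.1 ω ≤ (j:ℕ∞) ∧ 0 ≤ (d:ℝ) + dZ X j ω := by
    intro ω hne hhits
    set i := (τ0.1 ω).toNat with hi
    have hτi : τ0.1 ω = (i:ℕ∞) := (ENat.coe_toNat hne).symm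
    set L := max i (-d).toNat with hL
    obtain ⟨j, hj⟩ := hhits L
    have hdZj : dZ X j ω ≤ j := le_trans (le_abs_self _) (abs_dZ_le h01 j ω)
    have hLj : (L:ℝ) ≤ (j:ℝ) := le_trans hj hdZj
    have hLjn : L ≤ j := by exact_mod_cast hLj
    refine ⟨j, ?_, ?_⟩
    · rw [hτi]
      exact_mod_cast le_trans (le_max_left _ _) hLjn
    · have h1 : ((-d).toNat : ℝ) ≤ (L:ℝ) := by exact_mod_cast le_max_right i (-d).toNat
      have h2 : ((-d : ℤ) : ℝ) ≤ ((-d).toNat : ℝ) := by exact_mod_cast Int.self_le_toNat (-d)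
      push_cast at h2
      linarith [le_trans (le_trans h2 h1) hj]
  have hfin : μ {ω | τh ω = ⊤} = 0 := by
    have hsub : {ω | τh ω = ⊤} ⊆
        {ω | τ0.1 ω = ⊤} ∪ {ω | ¬ ∀ L:ℕ, ∃ j:ℕ, (L:ℝ) ≤ dZ X j ω} := by
      intro ω hω
      by_contra hcon
      have hne : τ0.1 ω ≠ ⊤ := fun hh => hcon (Or.inl hh)
      have hhits : ∀ L:ℕ, ∃ j:ℕ, (L:ℝ) ≤ dZ X j ω :=
        not_not.1 (fun hh => hcon (Or.inr hh))
      have hex := hex_of ω hne hhits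
      have : τh ω ≠ ⊤ := by
        rw [hτh]
        simp only
        rw [dif_pos hex]
        exact ENat.coe_ne_top _
      exact this hω
    refine measure_mono_null hsub (measure_union_null τ0.2.2 ?_)
    have := ae_hits hX'
    rw [ae_iff] at this
    exact this
  have hτh_st : IsAEFiniteStoppingTime μ X τh := ⟨hstop, hfin⟩
  -- integrals for the modified time
  have heh : ∀ k : ℕ, MeasurableSet {ω | τh ω ≤ (k:ℕ∞)} :=
    fun k => coinFiltration_le hm k _ (hstop k)
  have hint_g2 := integrable_gStop hX' d hn τh heh
  have hint_g3 := integrable_gStop hX' d hn' τh heh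
  -- a.e. pointwise inequalities
  have hae_ne : ∀ᵐ ω ∂μ, τ0.1 ω ≠ ⊤ := by
    rw [ae_iff]
    simpa using τ0.2.2
  have hae_hits := ae_hits hX'
  have hae_facts : ∀ᵐ ω ∂μ,
      (((d:ℝ) + dZ X ((τ0.1 ω).toNat) ω)/((n:ℝ)+((τ0.1 ω).toNat : ℕ))
        ≤ ((d:ℝ) + dZ X ((τh ω).toNat) ω)/((n:ℝ)+((τh ω).toNat : ℕ)))
      ∧ ((n:ℝ)/n' * (((d:ℝ) + dZ X ((τh ω).toNat) ω)/((n:ℝ)+((τh ω).toNat : ℕ)))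
        ≤ ((d:ℝ) + dZ X ((τh ω).toNat) ω)/((n':ℝ)+((τh ω).toNat : ℕ))) := by
    filter_upwards [hae_ne, hae_hits] with ω hne hhits
    have hex := hex_of ω hne hhits
    have hτhω : τh ω = ((Nat.find hex : ℕ) : ℕ∞) := by
      rw [hτh]; simp only; rw [dif_pos hex]
    have hkh : (τh ω).toNat = Nat.find hex := by rw [hτhω]; exact ENat.toNat_coe _
    set i := (τ0.1 ω).toNat with hi
    have hτi : τ0.1 ω = (i:ℕ∞) := (ENat.coe_toNat hne).symm
    have hY : 0 ≤ (d:ℝ) + dZ X ((τh ω).toNat) ω := by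
      rw [hkh]; exact (Nat.find_spec hex).2
    have hjpos : (0:ℝ) < (n:ℝ) + ((τh ω).toNat : ℕ) := by
      have : (0:ℝ) ≤ ((τh ω).toNat : ℝ) := Nat.cast_nonneg _
      linarith
    have hjpos' : (0:ℝ) < (n':ℝ) + ((τh ω).toNat : ℕ) := by
      have : (0:ℝ) ≤ ((τh ω).toNat : ℝ) := Nat.cast_nonneg _
      linarith
    constructor
    · by_cases hge : 0 ≤ (d:ℝ) + dZ X i ω
      · have hfind : Nat.find hex = i := by
          apply le_antisymm
          · exact Nat.find_min' hex ⟨le_of_eq hτi, hge⟩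
          · have h2 : ((i:ℕ):ℕ∞) ≤ ((Nat.find hex : ℕ) : ℕ∞) :=
              le_trans (le_of_eq hτi.symm) (Nat.find_spec hex).1
            exact ENat.coe_le_coe.1 h2
        rw [hkh, hfind]
      · have hipos : (0:ℝ) < (n:ℝ) + (i:ℕ) := by
          have : (0:ℝ) ≤ (i:ℝ) := Nat.cast_nonneg _
          linarith
        have hneg : ((d:ℝ) + dZ X i ω)/((n:ℝ)+(i:ℕ)) < 0 :=
          div_neg_of_neg_of_pos (not_le.1 hge) hipos
        have hpos2 : 0 ≤ ((d:ℝ) + dZ X ((τh ω).toNat) ω)/((n:ℝ)+((τh ω).toNat : ℕ)) :=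
          div_nonneg hY (le_of_lt hjpos)
        exact le_trans (le_of_lt hneg) hpos2
    · rw [div_mul_div_comm, div_le_div_iff₀ (by positivity) hjpos']
      have hjnn : (0:ℝ) ≤ ((τh ω).toNat : ℝ) := Nat.cast_nonneg _
      nlinarith [mul_nonneg (mul_nonneg hY hjnn) (sub_nonneg.2 hnn')]
  have hae1 : ∀ᵐ ω ∂μ, ((d:ℝ) + dZ X ((τ0.1 ω).toNat) ω)/((n:ℝ)+((τ0.1 ω).toNat : ℕ))
      ≤ ((d:ℝ) + dZ X ((τh ω).toNat) ω)/((n:ℝ)+((τh ω).toNat : ℕ)) := by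
    filter_upwards [hae_facts] with ω hω using hω.1
  have hae2 : ∀ᵐ ω ∂μ, (n:ℝ)/n' * (((d:ℝ) + dZ X ((τh ω).toNat) ω)/((n:ℝ)+((τh ω).toNat : ℕ)))
      ≤ ((d:ℝ) + dZ X ((τh ω).toNat) ω)/((n':ℝ)+((τh ω).toNat : ℕ)) := by
    filter_upwards [hae_facts] with ω hω using hω.2
  -- chain of integral inequalities
  have hI2 : ∫ ω, ((d:ℝ) + dZ X ((τ0.1 ω).toNat) ω)/((n:ℝ)+((τ0.1 ω).toNat : ℕ)) ∂μ
      ≤ ∫ ω, ((d:ℝ) + dZ X ((τh ω).toNat) ω)/((n:ℝ)+((τh ω).toNat : ℕ)) ∂μ :=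
    integral_mono_ae hint_g1 hint_g2 hae1
  have hI3 : (n:ℝ)/n' * ∫ ω, ((d:ℝ) + dZ X ((τh ω).toNat) ω)/((n:ℝ)+((τh ω).toNat : ℕ)) ∂μ
      ≤ ∫ ω, ((d:ℝ) + dZ X ((τh ω).toNat) ω)/((n':ℝ)+((τh ω).toNat : ℕ)) ∂μ := by
    rw [← integral_const_mul]
    exact integral_mono_ae (hint_g2.const_mul _) hint_g3 hae2
  have hg3 : (d:ℝ)/n' < ∫ ω, ((d:ℝ) + dZ X ((τh ω).toNat) ω)/((n':ℝ)+((τh ω).toNat : ℕ)) ∂μ := by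
    have hfrac_pos : (0:ℝ) < (n:ℝ)/n' := by positivity
    have step1 : (n:ℝ)/n' * ((d:ℝ)/n) < (n:ℝ)/n' *
        ∫ ω, ((d:ℝ) + dZ X ((τh ω).toNat) ω)/((n:ℝ)+((τh ω).toNat : ℕ)) ∂μ :=
      mul_lt_mul_of_pos_left (lt_of_lt_of_le hg1 hI2) hfrac_pos
    have heq : (n:ℝ)/n' * ((d:ℝ)/n) = (d:ℝ)/n' := by
      field_simp
    linarith
  -- conclude
  have hpay2 : ∀ ω, headsProp X a' n' ((τh ω).toNat) ω
      = 1/2 + ((d:ℝ) + dZ X ((τh ω).toNat) ω)/((n':ℝ)+((τh ω).toNat : ℕ))/2 :=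
    fun ω => headsProp_eq hd' hn' _ ω
  have hI4 : ∫ ω, headsProp X a' n' ((τh ω).toNat) ω ∂μ
      = 1/2 + (∫ ω, ((d:ℝ) + dZ X ((τh ω).toNat) ω)/((n':ℝ)+((τh ω).toNat : ℕ)) ∂μ)/2 := by
    rw [integral_congr_ae (Filter.Eventually.of_forall hpay2),
      integral_add (integrable_const _) (hint_g3.div_const 2), integral_const]
    simp only [measure_univ, probReal_univ, ENNReal.toReal_one, smul_eq_mul, one_mul]
    rw [integral_div]
  have han_eq' : (a':ℝ)/n' = 1/2 + ((d:ℝ)/n')/2 := by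
    field_simp
    linear_combination had'
  have hlt : (a':ℝ)/n' < ∫ ω, headsProp X a' n' ((τh ω).toNat) ω ∂μ := by
    rw [hI4, han_eq']
    linarith
  refine lt_of_lt_of_le hlt ?_
  exact le_ciSup (gameValue_bddAbove h01 hn' han') ⟨τh, hτh_st⟩
end
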